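/- If u : ℝ → ℝ is of class C², u' is bounded on ℝ, and a(x)u''(x) + H(x,u'(x)) = λ holds for all x with a(x) ≥ 0 and a bounded, then λ ≥ inf H. More precisely, since u' is C¹ and bounded, inf_{x∈ℝ} |u''(x)| = 0, hence λ ≥ inf_{(x,p)} H(x,p). -/

import Mathlib

/-- If `u` is `C²` with bounded derivative and `a x * u'' + H(x, u') = λ` with
`0 ≤ a ≤ 1`, then `inf |u''| = 0` and `λ ≥ inf H`. -/
theorem level_ge_inf_of_corrector
    (a : ℝ → ℝ) (H : ℝ → ℝ → ℝ) (u : ℝ → ℝ) (lam : ℝ)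
    (ha_cont : Continuous a) (ha : ∀ x, 0 ≤ a x ∧ a x ≤ 1)
    (hH_cont : Continuous fun q : ℝ × ℝ => H q.1 q.2)
    (hH_bdd : BddBelow (Set.range fun q : ℝ × ℝ => H q.1 q.2))
    (hu : ContDiff ℝ 2 u)
    (hu' : ∃ C : ℝ, ∀ x, |deriv u x| ≤ C)
    (heq : ∀ x, a x * deriv (deriv u) x + H x (deriv u x) = lam) :
    (⨅ x : ℝ, |deriv (deriv u) x|) = 0 ∧
      sInf (Set.range fun q : ℝ × ℝ => H q.1 q.2) ≤ lam := by
  obtain ⟨C, hC⟩ := hu'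
  have hC0 : 0 ≤ C := le_trans (abs_nonneg _) (hC 0)
  have h1 : ContDiff ℝ 1 (deriv u) := by
    have := (contDiff_succ_iff_deriv (n := 1)).mp (by exact_mod_cast hu)
    exact this.2.2
  have hdiff1 : Differentiable ℝ (deriv u) := h1.differentiable one_ne_zero
  have hcont2 : Continuous (deriv (deriv u)) := by
    have h0 := (contDiff_succ_iff_deriv (n := 0)).mp (by exact_mod_cast h1)
    exact h0.2.2.continuous
  have hbdd : BddBelow (Set.range fun x => |deriv (deriv u) x|) := by
    refine ⟨0, ?_⟩
    rintro y ⟨x, rfl⟩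
    exact abs_nonneg _
  set c : ℝ := ⨅ x : ℝ, |deriv (deriv u) x| with hc
  have hc0 : 0 ≤ c := le_ciInf fun x => abs_nonneg _
  have hlb : ∀ x, c ≤ |deriv (deriv u) x| := fun x => ciInf_le hbdd x
  have hmain : c = 0 := by
    by_contra hne
    have hcpos : 0 < c := lt_of_le_of_ne hc0 (Ne.symm hne)
    -- sign constancy
    have habs : ∀ x, c ≤ deriv (deriv u) x ∨ deriv (deriv u) x ≤ -c := by
      intro x
      rcases le_abs'.mp (hlb x) with h | h
      · right; linarith
      · left; exact h
    have hsign : (∀ x, c ≤ deriv (deriv u) x) ∨ (∀ x, deriv (deriv u) x ≤ -c) := by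
      rcases habs 0 with h0 | h0
      · left
        intro x
        by_contra hx
        have hx' : deriv (deriv u) x ≤ -c := (habs x).resolve_left hx
        have : (0 : ℝ) ∈ Set.Icc (deriv (deriv u) x) (deriv (deriv u) 0) :=
          ⟨by linarith, by linarith⟩
        obtain ⟨y, hy⟩ := intermediate_value_univ x 0 hcont2 this
        have := hlb y
        rw [hy] at this
        simp at this
        linarith
      · right
        intro x
        by_contra hx
        have hx' : c ≤ deriv (deriv u) x := (habs x).resolve_right hx
        have : (0 : ℝ) ∈ Set.Icc (deriv (deriv u) 0) (deriv (deriv u) x) :=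
          ⟨by linarith, by linarith⟩
        obtain ⟨y, hy⟩ := intermediate_value_univ 0 x hcont2 this
        have := hlb y
        rw [hy] at this
        simp at this
        linarith
    rcases hsign with hs | hs
    · -- u'' ≥ c > 0 everywhere ⇒ u' unbounded above
      have hmono : Monotone fun x => deriv u x - c * x := by
        apply monotone_of_deriv_nonneg
        · exact hdiff1.sub (differentiable_id.const_mul c)
        · intro x
          have hd : deriv (fun y => deriv u y - c * y) x = deriv (deriv u) x - c := by
            have := ((hdiff1 x).hasDerivAt.sub ((hasDerivAt_id x).const_mul c)).deriv
            simp at this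
            exact this
          rw [hd]
          have := hs x
          linarith
      have hx0 : (0 : ℝ) ≤ (2 * C + 1) / c := by positivity
      have := hmono hx0
      simp only [mul_zero, sub_zero] at this
      have hcx : c * ((2 * C + 1) / c) = 2 * C + 1 := by
        field_simp
      have h1' := abs_le.mp (hC 0)
      have h2' := abs_le.mp (hC ((2 * C + 1) / c))
      nlinarith [this]
    · -- u'' ≤ -c everywhere ⇒ u' unbounded below
      have hanti : Antitone fun x => deriv u x + c * x := by
        apply antitone_of_deriv_nonpos
        · exact hdiff1.add (differentiable_id.const_mul c)
        · intro x
          have hd : deriv (fun y => deriv u y + c * y) x = deriv (deriv u) x + c := by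
            have := ((hdiff1 x).hasDerivAt.add ((hasDerivAt_id x).const_mul c)).deriv
            simp at this
            exact this
          rw [hd]
          have := hs x
          linarith
      have hx0 : (0 : ℝ) ≤ (2 * C + 1) / c := by positivity
      have := hanti hx0
      simp only [mul_zero, add_zero] at this
      have hcx : c * ((2 * C + 1) / c) = 2 * C + 1 := by
        field_simp
      have h1' := abs_le.mp (hC 0)
      have h2' := abs_le.mp (hC ((2 * C + 1) / c))
      nlinarith [this]
  refine ⟨hmain, ?_⟩
  -- second part
  refine le_of_forall_pos_le_add ?_
  intro ε hε
  have hlt : (⨅ x : ℝ, |deriv (deriv u) x|) < ε := by rw [← hc, hmain]; exact hε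
  obtain ⟨x, hx⟩ := exists_lt_of_ciInf_lt hlt
  have hHx : sInf (Set.range fun q : ℝ × ℝ => H q.1 q.2) ≤ H x (deriv u x) :=
    csInf_le hH_bdd ⟨(x, deriv u x), rfl⟩
  have heqx := heq x
  have ⟨ha0, ha1⟩ := ha x
  have habs : |a x * deriv (deriv u) x| ≤ |deriv (deriv u) x| := by
    rw [abs_mul, abs_of_nonneg ha0]
    nlinarith [abs_nonneg (deriv (deriv u) x)]
  have := abs_le.mp habs
  linarith
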